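/- Let E be an n-dimensional evolution algebra with natural basis {e_1,...,e_n} and multiplication e_i² = a_{i,i+1} e_{i+1} + a_{in} e_n for i < n−1, e_{n−1}² = a_{n−1,n} e_n, e_n² = 0. If dim E² < n−1, then dim Der(E) ≥ 3. -/

import Mathlib

/-- The space of derivations, as a submodule of `End K E`. -/
def DerSubmodule (K E : Type*) [Field K] [NonUnitalNonAssocRing E]
    [Module K E] [SMulCommClass K E E] [IsScalarTower K E E] :
    Submodule K (Module.End K E) where
  carrier := {d | ∀ x y : E, d (x * y) = d x * y + x * d y}
  zero_mem' := by intro x y; simp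
  add_mem' := by
    intro d₁ d₂ h₁ h₂ x y
    simp [h₁ x y, h₂ x y, add_mul, mul_add]
    abel
  smul_mem' := by
    intro c d h x y
    simp [h x y, smul_add, smul_mul_assoc, mul_smul_comm]

section Aux

variable {K E : Type*} [Field K] [NonUnitalNonAssocRing E]
    [Module K E] [SMulCommClass K E E] [IsScalarTower K E E]

lemma mem_der_iff {n : ℕ} (e : Module.Basis (Fin n) K E) (d : Module.End K E) :
    d ∈ DerSubmodule K E ↔ ∀ i j : Fin n, d (e i * e j) = d (e i) * e j + e i * d (e j) := by
  constructor
  · exact fun h i j => h (e i) (e j)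
  · intro h x y
    let B1 : E →ₗ[K] E →ₗ[K] E := (LinearMap.mul K E).compr₂ d
    let B2 : E →ₗ[K] E →ₗ[K] E := (LinearMap.mul K E).comp d + (LinearMap.mul K E).compl₂ d
    have hB : B1 = B2 := by
      apply e.ext; intro i
      apply e.ext; intro j
      simpa [B1, B2] using h i j
    have := LinearMap.congr_fun (LinearMap.congr_fun hB x) y
    simpa [B1, B2] using this

/-- a basis vector all of whose products with basis vectors vanish annihilates everything -/
lemma ann_of_basis {n : ℕ} (e : Module.Basis (Fin n) K E) (u : Fin n)
    (hzero : ∀ i j : Fin n, i ≠ j → e i * e j = 0) (hu : e u * e u = 0) :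
    (∀ x : E, e u * x = 0) ∧ (∀ x : E, x * e u = 0) := by
  constructor
  · intro x
    have : LinearMap.mul K E (e u) = 0 := by
      apply e.ext; intro j
      by_cases h : u = j
      · subst h; simpa using hu
      · simpa using hzero u j h
    simpa using LinearMap.congr_fun this x
  · intro x
    have : (LinearMap.mul K E).flip (e u) = 0 := by
      apply e.ext; intro j
      by_cases h : j = u
      · subst h; simpa using hu
      · simpa using hzero j u h
    simpa using LinearMap.congr_fun this x

end Aux

/-- for the evolution algebra with `e_i² = a_{i,i+1}e_{i+1} + a_{in}e_n`
(`i < n−1`), `e_{n−1}² = a_{n−1,n}e_n`, `e_n² = 0`, if `dim E² < n − 1` then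
`dim Der(E) ≥ 3`. -/
theorem stmt7 {K E : Type*} [Field K] [CharZero K] [NonUnitalNonAssocRing E]
    [Module K E] [SMulCommClass K E E] [IsScalarTower K E E]
    (n : ℕ) (hn : 2 ≤ n) (a : Fin n → Fin n → K) (e : Module.Basis (Fin n) K E)
    (hzero : ∀ i j : Fin n, i ≠ j → e i * e j = 0)
    (h1 : ∀ i : Fin n, ∀ hi : (i : ℕ) < n - 2,
      e i * e i = a i ⟨(i : ℕ) + 1, by omega⟩ • e ⟨(i : ℕ) + 1, by omega⟩
        + a i ⟨n - 1, by omega⟩ • e ⟨n - 1, by omega⟩)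
    (h2 : e ⟨n - 2, by omega⟩ * e ⟨n - 2, by omega⟩
        = a ⟨n - 2, by omega⟩ ⟨n - 1, by omega⟩ • e ⟨n - 1, by omega⟩)
    (h3 : e ⟨n - 1, by omega⟩ * e ⟨n - 1, by omega⟩ = 0)
    (hdim : Module.finrank K ↥(Submodule.span K {z : E | ∃ x y : E, x * y = z}) < n - 1) :
    3 ≤ Module.finrank K ↥(DerSubmodule K E) := by
  haveI : Module.Finite K E := Module.Finite.of_basis e
  -- nat-indexed structure constants
  set a' : ℕ → ℕ → K := fun i j => if h : i < n ∧ j < n then a ⟨i, h.1⟩ ⟨j, h.2⟩ else 0 with ha'def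
  have ha' : ∀ (i j : ℕ) (hi : i < n) (hj : j < n), a' i j = a ⟨i, hi⟩ ⟨j, hj⟩ := by
    intro i j hi hj; simp [ha'def, hi, hj]
  have hτn : n - 1 < n := by omega
  set τ : Fin n := ⟨n - 1, hτn⟩ with hτdef
  have hτann : (∀ x : E, e τ * x = 0) ∧ (∀ x : E, x * e τ = 0) :=
    ann_of_basis e τ hzero h3
  -- restated square formulas with a'
  have hsq1 : ∀ (i : ℕ) (hi : i < n - 2),
      e ⟨i, by omega⟩ * e ⟨i, by omega⟩
        = a' i (i + 1) • e ⟨i + 1, by omega⟩ + a' i (n - 1) • e τ := by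
    intro i hi
    rw [ha' i (i+1) (by omega) (by omega), ha' i (n-1) (by omega) (by omega)]
    exact h1 ⟨i, by omega⟩ hi
  have hsq2 : e ⟨n - 2, by omega⟩ * e ⟨n - 2, by omega⟩ = a' (n-2) (n-1) • e τ := by
    rw [ha' (n-2) (n-1) (by omega) (by omega)]; exact h2
  -- the "triangular independence" finisher
  have main : ∀ D0 D1 D2 : Module.End K E, D0 ∈ DerSubmodule K E → D1 ∈ DerSubmodule K E →
      D2 ∈ DerSubmodule K E → ∀ p0 p1 p2 q0 q1 q2 : Fin n,
      e.repr (D0 (e p0)) q0 ≠ 0 → e.repr (D1 (e p1)) q1 ≠ 0 → e.repr (D2 (e p2)) q2 ≠ 0 →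
      e.repr (D1 (e p0)) q0 = 0 → e.repr (D2 (e p0)) q0 = 0 → e.repr (D2 (e p1)) q1 = 0 →
      3 ≤ Module.finrank K ↥(DerSubmodule K E) := by
    intro D0 D1 D2 m0 m1 m2 p0 p1 p2 q0 q1 q2 hd0 hd1 hd2 h01 h02 h12
    have hind : LinearIndependent K
        ![(⟨D0, m0⟩ : DerSubmodule K E), ⟨D1, m1⟩, ⟨D2, m2⟩] := by
      rw [Fintype.linearIndependent_iff]
      intro g hg
      have hg' : g 0 • D0 + g 1 • D1 + g 2 • D2 = 0 := by
        have := congrArg (Submodule.subtype (DerSubmodule K E)) hg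
        simpa [Fin.sum_univ_three] using this
      have ev : ∀ (p q : Fin n), g 0 * e.repr (D0 (e p)) q + g 1 * e.repr (D1 (e p)) q
          + g 2 * e.repr (D2 (e p)) q = 0 := by
        intro p q
        have := congrArg (fun D : Module.End K E => e.repr (D (e p)) q) hg'
        simpa [map_add, map_smul, Finsupp.add_apply, Finsupp.smul_apply, smul_eq_mul] using this
      have e0 := ev p0 q0
      rw [h01, h02] at e0
      simp only [mul_zero, add_zero, zero_mul, zero_add] at e0
      have hg0 : g 0 = 0 := (mul_eq_zero.mp e0).resolve_right hd0
      have e1 := ev p1 q1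
      rw [h12, hg0] at e1
      simp only [mul_zero, add_zero, zero_mul, zero_add] at e1
      have hg1 : g 1 = 0 := (mul_eq_zero.mp e1).resolve_right hd1
      have e2 := ev p2 q2
      rw [hg0, hg1] at e2
      simp only [mul_zero, add_zero, zero_mul, zero_add] at e2
      have hg2 : g 2 = 0 := (mul_eq_zero.mp e2).resolve_right hd2
      intro i; fin_cases i <;> assumption
    simpa using hind.fintype_card_le_finrank
  -- column derivation: sends e m to annihilator u, kills everything else
  have colDer : ∀ (m : Fin n) (u : E), (∀ x : E, u * x = 0) → (∀ x : E, x * u = 0) →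
      (m : ℕ) ≠ n - 1 →
      (∀ i : ℕ, ∀ hi : i < n - 2, i + 1 = (m : ℕ) → a' i (i + 1) = 0) →
      e.constr K (fun j => if j = m then u else 0) ∈ DerSubmodule K E := by
    intro m u hu1 hu2 hm hz
    rw [mem_der_iff e]
    intro i j
    have hd : ∀ p : Fin n, (e.constr K (fun j => if j = m then u else 0)) (e p)
        = if p = m then u else 0 := fun p => e.constr_basis K _ p
    have hrhs : (e.constr K (fun j => if j = m then u else 0)) (e i) * e j
        + e i * (e.constr K (fun j => if j = m then u else 0)) (e j) = 0 := by
      rw [hd, hd]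
      by_cases hi : i = m <;> by_cases hj : j = m <;> simp [hi, hj, hu1, hu2]
    rw [hrhs]
    by_cases hij : i = j
    · subst hij
      have hτm : ¬ (τ = m) := fun h => hm (by rw [← h])
      have hi3 : (i : ℕ) < n - 2 ∨ (i : ℕ) = n - 2 ∨ (i : ℕ) = n - 1 := by omega
      rcases hi3 with hi3 | hi3 | hi3
      · have hsq := hsq1 (i : ℕ) hi3
        simp only [Fin.eta] at hsq
        rw [hsq, map_add, map_smul, map_smul, hd, hd, if_neg hτm]
        by_cases h : (⟨(i : ℕ) + 1, by omega⟩ : Fin n) = m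
        · rw [if_pos h, hz (i : ℕ) hi3 (by rw [← h]), zero_smul, smul_zero, add_zero]
        · rw [if_neg h]; simp
      · have hieq : i = ⟨n - 2, by omega⟩ := by ext; simpa using hi3
        rw [hieq, hsq2, map_smul, hd, if_neg hτm]; simp
      · have hieq : i = τ := by ext; simpa using hi3
        rw [hieq]
        have : e τ * e τ = 0 := h3
        rw [this, map_zero]
    · rw [hzero i j hij, map_zero]
  -- some chain coefficient vanishes
  have hex : (∃ k, k < n - 2 ∧ a' k (k + 1) = 0) ∨ a' (n - 2) (n - 1) = 0 := by
    by_contra hcon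
    push_neg at hcon
    obtain ⟨hA, hB⟩ := hcon
    set W : Submodule K E := Submodule.span K {z : E | ∃ x y : E, x * y = z} with hWdef
    have hτW : e τ ∈ W := by
      have hmem : e ⟨n - 2, by omega⟩ * e ⟨n - 2, by omega⟩ ∈ W :=
        Submodule.subset_span ⟨_, _, rfl⟩
      have := W.smul_mem (a' (n - 2) (n - 1))⁻¹ hmem
      rwa [hsq2, smul_smul, inv_mul_cancel₀ hB, one_smul] at this
    have hmW : ∀ m : ℕ, 1 ≤ m → m ≤ n - 1 → ∀ hm' : m < n, e ⟨m, hm'⟩ ∈ W := by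
      intro m hm1 hm2 hm'
      rcases eq_or_lt_of_le hm2 with heq | hlt
      · have : (⟨m, hm'⟩ : Fin n) = τ := by ext; simpa using heq
        rw [this]; exact hτW
      · have hi : m - 1 < n - 2 := by omega
        have hsq := hsq1 (m - 1) hi
        have hm1' : m - 1 + 1 = m := by omega
        simp only [hm1'] at hsq
        have hmem : e ⟨m - 1, by omega⟩ * e ⟨m - 1, by omega⟩ ∈ W :=
          Submodule.subset_span ⟨_, _, rfl⟩
        have hsub : a' (m - 1) m • e ⟨m, hm'⟩ ∈ W := by
          have := W.sub_mem hmem (W.smul_mem (a' (m - 1) (n - 1)) hτW)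
          rw [hsq] at this
          simpa using this
        have := W.smul_mem (a' (m - 1) m)⁻¹ hsub
        rw [smul_smul, inv_mul_cancel₀ (by rw [← hm1']; exact hA (m - 1) hi), one_smul] at this
        exact this
    have hfam : LinearIndependent K
        (fun m : Fin (n - 1) => (⟨e ⟨(m : ℕ) + 1, by omega⟩, hmW ((m : ℕ) + 1) (by omega)
          (by omega) (by omega)⟩ : W)) := by
      apply LinearIndependent.of_comp W.subtype
      have hinj : Function.Injective (fun m : Fin (n - 1) => (⟨(m : ℕ) + 1, by omega⟩ : Fin n)) := by
        intro x y hxy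
        have := congrArg Fin.val hxy
        simp at this
        exact Fin.ext this
      exact e.linearIndependent.comp _ hinj
    have := hfam.fintype_card_le_finrank
    simp at this
    omega
  -- the diagonal derivation for a unique break k
  have diagDer : ∀ k : ℕ, ∀ _hk : k < n - 1, (k < n - 2 → a' k (k + 1) = 0) →
      (∀ i, i < n - 2 → i ≠ k → a' i (i + 1) ≠ 0) →
      ∃ D : Module.End K E, D ∈ DerSubmodule K E ∧ D (e τ) = e τ ∧
        e.repr (D (e ⟨0, by omega⟩)) τ = 0 ∧
        (k < n - 2 → e.repr (D (e ⟨k + 1, by omega⟩)) τ = 0) := by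
    intro k hk hka huniq
    have h2K : (2 : K) ≠ 0 := two_ne_zero
    set c : ℕ → K := fun j =>
        if j ≤ k then (2 : K) ^ ((j : ℤ) - (k : ℤ) - 1) else (2 : K) ^ ((j : ℤ) - (n : ℤ) + 1)
      with hcdef
    set γ : ℕ → K := fun j => if h : 1 ≤ j ∧ j ≤ n - 2 then
        a' (j - 1) (n - 1) * (2 * c (j - 1) - 1) * (a' (j - 1) j)⁻¹ else 0 with hγdef
    set D := e.constr K (fun j : Fin n => c (j : ℕ) • e j + γ (j : ℕ) • e τ) with hDdef
    have hD : ∀ p : Fin n, D (e p) = c (p : ℕ) • e p + γ (p : ℕ) • e τ :=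
      fun p => e.constr_basis K _ p
    have hγ0 : γ 0 = 0 := by simp only [hγdef]; rw [dif_neg (by omega)]
    have hγτ : γ (n - 1) = 0 := by simp only [hγdef]; rw [dif_neg (by omega)]
    have hγs : ∀ i : ℕ, i < n - 2 →
        γ (i + 1) = a' i (n - 1) * (2 * c i - 1) * (a' i (i + 1))⁻¹ := by
      intro i hi
      simp only [hγdef]
      rw [dif_pos ⟨by omega, by omega⟩]
      simp
    have hcτ : c (n - 1) = 1 := by
      simp only [hcdef]
      rw [if_neg (by omega)]
      rw [show ((n - 1 : ℕ) : ℤ) - (n : ℤ) + 1 = 0 by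
        push_cast [Nat.cast_sub (by omega : 1 ≤ n)]; ring]
      exact zpow_zero 2
    have hck : c k = 2⁻¹ := by
      simp only [hcdef]
      rw [if_pos le_rfl, show (k : ℤ) - (k : ℤ) - 1 = -1 by ring, zpow_neg_one]
    have hcρ : c (n - 2) = 2⁻¹ := by
      rcases eq_or_lt_of_le (by omega : k ≤ n - 2) with heq | hlt
      · rw [← heq]; exact hck
      · simp only [hcdef]
        rw [if_neg (by omega)]
        rw [show ((n - 2 : ℕ) : ℤ) - (n : ℤ) + 1 = -1 by
          push_cast [Nat.cast_sub (by omega : 2 ≤ n)]; ring, zpow_neg_one]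
    have hstep : ∀ i : ℕ, i < n - 2 → i ≠ k → c (i + 1) = 2 * c i := by
      intro i hi hik
      simp only [hcdef]
      by_cases hik' : i + 1 ≤ k
      · rw [if_pos hik', if_pos (by omega : i ≤ k)]
        rw [show ((i + 1 : ℕ) : ℤ) - (k : ℤ) - 1 = ((i : ℤ) - (k : ℤ) - 1) + 1 by push_cast; ring,
          zpow_add_one₀ h2K]
        ring
      · rw [if_neg hik', if_neg (by omega : ¬ i ≤ k)]
        rw [show ((i + 1 : ℕ) : ℤ) - (n : ℤ) + 1 = ((i : ℤ) - (n : ℤ) + 1) + 1 by push_cast; ring,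
          zpow_add_one₀ h2K]
        ring
    have hmem : D ∈ DerSubmodule K E := by
      rw [mem_der_iff e]
      intro i j
      by_cases hij : i = j
      · subst hij
        have hRHS : D (e i) * e i + e i * D (e i) = (2 * c (i : ℕ)) • (e i * e i) := by
          rw [hD]
          rw [add_mul, mul_add, smul_mul_assoc, smul_mul_assoc, mul_smul_comm, mul_smul_comm,
            hτann.1 (e i), hτann.2 (e i)]
          match_scalars
          ring
        rw [hRHS]
        have hi3 : (i : ℕ) < n - 2 ∨ (i : ℕ) = n - 2 ∨ (i : ℕ) = n - 1 := by omega
        rcases hi3 with hi3 | hi3 | hi3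
        · have hsq := hsq1 (i : ℕ) hi3
          simp only [Fin.eta] at hsq
          rw [hsq, map_add, map_smul, map_smul, hD, hD]
          rw [show ((⟨(i : ℕ) + 1, by omega⟩ : Fin n) : ℕ) = (i : ℕ) + 1 from rfl]
          rw [show ((τ : Fin n) : ℕ) = n - 1 from rfl]
          rw [hcτ, hγτ, hγs (i : ℕ) hi3]
          by_cases hik : (i : ℕ) = k
          · have ha0 : a' (i : ℕ) ((i : ℕ) + 1) = 0 := by rw [hik]; exact hka (by omega)
            have hci : c (i : ℕ) = 2⁻¹ := by rw [hik]; exact hck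
            rw [ha0, hci]
            match_scalars <;> field_simp <;> simp
          · have hA : a' (i : ℕ) ((i : ℕ) + 1) ≠ 0 := huniq (i : ℕ) hi3 hik
            rw [hstep (i : ℕ) hi3 hik]
            match_scalars
            · ring
            · field_simp
              ring
        · have hieq : i = ⟨n - 2, by omega⟩ := by ext; simpa using hi3
          rw [hieq, hsq2, map_smul, hD]
          rw [show ((τ : Fin n) : ℕ) = n - 1 from rfl]
          rw [hcτ, hγτ]
          rw [show ((⟨n - 2, by omega⟩ : Fin n) : ℕ) = n - 2 from rfl, hcρ]
          match_scalars
          field_simp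
          simp
        · have hieq : i = τ := by ext; simpa using hi3
          rw [hieq, h3, map_zero, smul_zero]
      · rw [hzero i j hij, map_zero, hD, hD]
        rw [add_mul, mul_add, smul_mul_assoc, smul_mul_assoc, mul_smul_comm, mul_smul_comm,
          hτann.1 (e j), hτann.2 (e i), hzero i j hij]
        simp
    refine ⟨D, hmem, ?_, ?_, ?_⟩
    · rw [hD]
      rw [show ((τ : Fin n) : ℕ) = n - 1 from rfl, hcτ, hγτ]
      simp
    · rw [hD]
      rw [show ((⟨0, by omega⟩ : Fin n) : ℕ) = 0 from rfl, hγ0]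
      simp only [zero_smul, add_zero, map_smul, Module.Basis.repr_self, Finsupp.smul_apply,
        Finsupp.single_apply]
      have hne : ¬ (⟨0, by omega⟩ : Fin n) = τ := by
        intro h
        have h' := congrArg Fin.val h
        simp only [hτdef] at h'
        omega
      rw [if_neg hne]
      simp
    · intro hk2
      rw [hD]
      rw [show ((⟨k + 1, by omega⟩ : Fin n) : ℕ) = k + 1 from rfl]
      rw [hγs k hk2, hka hk2, inv_zero, mul_zero, zero_smul, add_zero]
      simp only [map_smul, Module.Basis.repr_self, Finsupp.smul_apply, Finsupp.single_apply]
      have hne : ¬ (⟨k + 1, by omega⟩ : Fin n) = τ := by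
        intro h
        have h' := congrArg Fin.val h
        simp only [hτdef] at h'
        omega
      rw [if_neg hne]
      simp
  -- helper values
  have hT1val : ∀ (m : Fin n) (u : E) (p : Fin n),
      (e.constr K (fun j => if j = m then u else 0)) (e p) = if p = m then u else 0 :=
    fun m u p => e.constr_basis K _ p
  have hrepr1 : ∀ p : Fin n, e.repr (e p) p = 1 := by
    intro p; simp
  have hrepr0 : ∀ p q : Fin n, p ≠ q → e.repr (e p) q = 0 := by
    intro p q h; rw [e.repr_self, Finsupp.single_eq_of_ne h.symm]
  have hm0 : (0 : ℕ) < n := by omega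
  have h0n1 : (0 : ℕ) < n - 1 := by omega
  have hρ21 : n - 2 < n - 1 := by omega
  have mem0 : e.constr K (fun j => if j = (⟨0, hm0⟩ : Fin n) then e τ else 0) ∈ DerSubmodule K E :=
    colDer (⟨0, hm0⟩ : Fin n) (e τ) hτann.1 hτann.2 (Nat.ne_of_lt h0n1)
      (fun i hi h => absurd h (by simp))
  by_cases hS : ∃ k, k < n - 2 ∧ a' k (k + 1) = 0
  · obtain ⟨k, hk2, hk0⟩ := hS
    have hm1n : k + 1 < n := by omega
    have hm1n' : k + 1 < n - 1 := by omega
    have hkn1 : k < n - 1 := by omega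
    have mem1 : e.constr K (fun j => if j = (⟨k + 1, hm1n⟩ : Fin n) then e τ else 0) ∈ DerSubmodule K E :=
      colDer (⟨k + 1, hm1n⟩ : Fin n) (e τ) hτann.1 hτann.2
        (Nat.ne_of_lt hm1n')
        (fun i hi h => by
          have hik : i = k := Nat.succ_injective (show i + 1 = k + 1 from h)
          rw [hik]; exact hk0)
    by_cases hS2 : ∃ k', k' < n - 2 ∧ a' k' (k' + 1) = 0 ∧ k' ≠ k
    · -- two breaks
      obtain ⟨k', hk2', hk0', hkk⟩ := hS2
      have hm2n : k' + 1 < n := by omega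
      have hm2n' : k' + 1 < n - 1 := by omega
      have mem2 : e.constr K (fun j => if j = (⟨k' + 1, hm2n⟩ : Fin n) then e τ else 0) ∈ DerSubmodule K E :=
        colDer (⟨k' + 1, hm2n⟩ : Fin n) (e τ) hτann.1 hτann.2
          (Nat.ne_of_lt hm2n')
          (fun i hi h => by
            have hik : i = k' := Nat.succ_injective (show i + 1 = k' + 1 from h)
            rw [hik]; exact hk0')
      apply main _ _ _ mem0 mem1 mem2 (⟨0, hm0⟩ : Fin n) (⟨k + 1, hm1n⟩ : Fin n) (⟨k' + 1, hm2n⟩ : Fin n) τ τ τ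
      · rw [hT1val, if_pos rfl, hrepr1]; exact one_ne_zero
      · rw [hT1val, if_pos rfl, hrepr1]; exact one_ne_zero
      · rw [hT1val, if_pos rfl, hrepr1]; exact one_ne_zero
      · rw [hT1val, if_neg (Fin.ne_of_val_ne (Nat.ne_of_lt (Nat.succ_pos k))), map_zero]; rfl
      · rw [hT1val, if_neg (Fin.ne_of_val_ne (Nat.ne_of_lt (Nat.succ_pos k'))), map_zero]; rfl
      · rw [hT1val, if_neg (Fin.ne_of_val_ne (fun hh => hkk (Nat.succ_injective (show k' + 1 = k + 1 from hh.symm)))), map_zero]; rfl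
    · -- unique break
      have huniq : ∀ i, i < n - 2 → i ≠ k → a' i (i + 1) ≠ 0 := by
        intro i hi hik h0
        exact hS2 ⟨i, hi, h0, hik⟩
      obtain ⟨D3, memD3, hD3τ, hD3z, hD3k⟩ := diagDer k hkn1 (fun _ => hk0) huniq
      apply main _ _ _ mem0 mem1 memD3 (⟨0, hm0⟩ : Fin n) (⟨k + 1, hm1n⟩ : Fin n) τ τ τ τ
      · rw [hT1val, if_pos rfl, hrepr1]; exact one_ne_zero
      · rw [hT1val, if_pos rfl, hrepr1]; exact one_ne_zero
      · rw [hD3τ, hrepr1]; exact one_ne_zero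
      · rw [hT1val, if_neg (Fin.ne_of_val_ne (Nat.ne_of_lt (Nat.succ_pos k))), map_zero]; rfl
      · exact hD3z
      · exact hD3k hk2
  · -- no break below n-2 : then a'(n-2)(n-1) = 0
    have hAne : ∀ i, i < n - 2 → a' i (i + 1) ≠ 0 := by
      intro i hi h0
      exact hS ⟨i, hi, h0⟩
    have hρτ : a' (n - 2) (n - 1) = 0 := by
      rcases hex with ⟨k, hk2, hk0⟩ | h
      · exact absurd ⟨k, hk2, hk0⟩ hS
      · exact h
    have hρn : n - 2 < n := by omega
    have hρsq : e (⟨n - 2, hρn⟩ : Fin n) * e (⟨n - 2, hρn⟩ : Fin n) = 0 := by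
      have : e (⟨n - 2, hρn⟩ : Fin n) * e (⟨n - 2, hρn⟩ : Fin n) = a' (n - 2) (n - 1) • e τ := hsq2
      rw [this, hρτ, zero_smul]
    have hρann := ann_of_basis e (⟨n - 2, hρn⟩ : Fin n) hzero hρsq
    have mem2 : e.constr K (fun j => if j = (⟨0, hm0⟩ : Fin n) then e (⟨n - 2, hρn⟩ : Fin n) else 0) ∈ DerSubmodule K E :=
      colDer (⟨0, hm0⟩ : Fin n) (e (⟨n - 2, hρn⟩ : Fin n)) hρann.1 hρann.2
        (Nat.ne_of_lt h0n1)
        (fun i hi h => absurd h (by simp))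
    have hρ1 : n - 2 < n - 1 := hρ21
    obtain ⟨D3, memD3, hD3τ, hD3z, _⟩ := diagDer (n - 2) hρ1
      (fun h => absurd h (lt_irrefl _)) (fun i hi hik => hAne i hi)
    apply main _ _ _ mem0 memD3 mem2 (⟨0, hm0⟩ : Fin n) τ (⟨0, hm0⟩ : Fin n) τ τ (⟨n - 2, hρn⟩ : Fin n)
    · rw [hT1val, if_pos rfl, hrepr1]; exact one_ne_zero
    · rw [hD3τ, hrepr1]; exact one_ne_zero
    · rw [hT1val, if_pos rfl, hrepr1]; exact one_ne_zero
    · exact hD3z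
    · rw [hT1val, if_pos rfl]; exact hrepr0 ⟨n - 2, hρn⟩ τ (Fin.ne_of_val_ne (Nat.ne_of_lt hρ21))
    · rw [hT1val, if_neg (Fin.ne_of_val_ne (Nat.ne_of_gt h0n1)), map_zero]; rfl
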